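/- Let h, q : ℝⁿ → ℝ be twice continuously differentiable with q convex and −ℓ I ⪯ ∇²h + ∇²q ⪯ ℓ I for some ℓ > 0, let P be proper closed, β ∈ (0, 1/ℓ), and let {xᵗ} be the proximal gradient iterates. If x* is a cluster point of {xᵗ} along a subsequence {x^{t_i}} with ‖xᵗ⁺¹ − xᵗ‖ → 0, then lim_{i→∞} P(x^{t_i+1}) = P(x*). -/

import Mathlib

open scoped RealInnerProductSpace

/-- For the proximal gradient iterates, if `x*` is a cluster point along a subsequence
`x^{t_i}` and `‖xᵗ⁺¹ − xᵗ‖ → 0`, then `P(x^{t_i+1}) → P(x*)`. -/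
theorem prox_grad_P_converges_along_subseq {n : ℕ}
    (h q : EuclideanSpace ℝ (Fin n) → ℝ)
    (gradh gradq : EuclideanSpace ℝ (Fin n) → EuclideanSpace ℝ (Fin n))
    (Hh Hq : EuclideanSpace ℝ (Fin n) → (EuclideanSpace ℝ (Fin n) →L[ℝ] EuclideanSpace ℝ (Fin n)))
    (P : EuclideanSpace ℝ (Fin n) → EReal)
    (ℓ β : ℝ) (hℓ : 0 < ℓ) (hβ : β ∈ Set.Ioo (0 : ℝ) (1 / ℓ))
    (hgradh : ∀ x, HasGradientAt h (gradh x) x)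
    (hgradq : ∀ x, HasGradientAt q (gradq x) x)
    (hHh : ∀ x, HasFDerivAt gradh (Hh x) x) (hHhc : Continuous Hh)
    (hHq : ∀ x, HasFDerivAt gradq (Hq x) x) (hHqc : Continuous Hq)
    (hqconv : ConvexOn ℝ Set.univ q)
    (hbd : ∀ x v, -ℓ * ‖v‖ ^ 2 ≤ ⟪v, (Hh x) v + (Hq x) v⟫ ∧
      ⟪v, (Hh x) v + (Hq x) v⟫ ≤ ℓ * ‖v‖ ^ 2)
    (hProper : ∃ y, P y ≠ ⊤) (hNoBot : ∀ y, P y ≠ ⊥) (hlsc : LowerSemicontinuous P)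
    (x : ℕ → EuclideanSpace ℝ (Fin n))
    (hiter : ∀ t, ∀ y,
      ((⟪gradh (x t), x (t + 1) - x t⟫ + (1 / (2 * β)) * ‖x (t + 1) - x t‖ ^ 2 : ℝ) : EReal)
          + P (x (t + 1)) ≤
        ((⟪gradh (x t), y - x t⟫ + (1 / (2 * β)) * ‖y - x t‖ ^ 2 : ℝ) : EReal) + P y)
    (xstar : EuclideanSpace ℝ (Fin n)) (ti : ℕ → ℕ) (hti : StrictMono ti)
    (hsub : Filter.Tendsto (fun i => x (ti i)) Filter.atTop (nhds xstar))
    (hsucc : Filter.Tendsto (fun t => ‖x (t + 1) - x t‖) Filter.atTop (nhds 0)) :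
    Filter.Tendsto (fun i => P (x (ti i + 1))) Filter.atTop (nhds (P xstar)) := by

  obtain ⟨hβ0, hβℓ⟩ := hβ
  have hgc : Continuous gradh := continuous_iff_continuousAt.mpr fun z => (hHh z).continuousAt
  have hti' : Filter.Tendsto ti Filter.atTop Filter.atTop := hti.tendsto_atTop
  have hna : Filter.Tendsto (fun i => ‖x (ti i + 1) - x (ti i)‖) Filter.atTop (nhds 0) :=
    hsucc.comp hti'
  have hd : Filter.Tendsto (fun i => x (ti i + 1) - x (ti i)) Filter.atTop (nhds 0) := by
    rw [tendsto_zero_iff_norm_tendsto_zero]; exact hna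
  have hz : Filter.Tendsto (fun i => x (ti i + 1)) Filter.atTop (nhds xstar) := by
    have := hd.add hsub
    simpa using this
  have hga : Filter.Tendsto (fun i => gradh (x (ti i))) Filter.atTop (nhds (gradh xstar)) :=
    (hgc.tendsto _).comp hsub
  set a : ℕ → ℝ := fun i =>
    ⟪gradh (x (ti i)), x (ti i + 1) - x (ti i)⟫ + (1 / (2 * β)) * ‖x (ti i + 1) - x (ti i)‖ ^ 2
    with ha
  set b : ℕ → ℝ := fun i =>
    ⟪gradh (x (ti i)), xstar - x (ti i)⟫ + (1 / (2 * β)) * ‖xstar - x (ti i)‖ ^ 2 with hb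
  have hta : Filter.Tendsto a Filter.atTop (nhds 0) := by
    have h1 := (hga.inner hd).add ((hna.pow 2).const_mul (1 / (2 * β)))
    simpa only [inner_zero_right, ne_eq, OfNat.ofNat_ne_zero, not_false_eq_true, zero_pow,
      mul_zero, add_zero] using h1
  have hdb : Filter.Tendsto (fun i => xstar - x (ti i)) Filter.atTop (nhds 0) := by
    have := (tendsto_const_nhds (x := xstar)).sub hsub
    simpa using this
  have hnb : Filter.Tendsto (fun i => ‖xstar - x (ti i)‖) Filter.atTop (nhds 0) := by
    simpa using hdb.norm
  have htb : Filter.Tendsto b Filter.atTop (nhds 0) := by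
    have h1 := (hga.inner hdb).add ((hnb.pow 2).const_mul (1 / (2 * β)))
    simpa only [inner_zero_right, ne_eq, OfNat.ofNat_ne_zero, not_false_eq_true, zero_pow,
      mul_zero, add_zero] using h1
  have hc : Filter.Tendsto (fun i => b i - a i) Filter.atTop (nhds 0) := by
    simpa using htb.sub hta
  have key : ∀ i, P (x (ti i + 1)) ≤ ((b i - a i : ℝ) : EReal) + P xstar := by
    intro i
    have h0 : ((a i : ℝ) : EReal) + P (x (ti i + 1)) ≤ ((b i : ℝ) : EReal) + P xstar :=
      hiter (ti i) xstar
    have h1 : ((-a i : ℝ) : EReal) + (((a i : ℝ) : EReal) + P (x (ti i + 1))) ≤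
        ((-a i : ℝ) : EReal) + (((b i : ℝ) : EReal) + P xstar) := add_le_add_right h0 _
    calc P (x (ti i + 1))
        = ((-a i : ℝ) : EReal) + (((a i : ℝ) : EReal) + P (x (ti i + 1))) := by
          rw [← add_assoc, ← EReal.coe_add]
          norm_num
      _ ≤ ((-a i : ℝ) : EReal) + (((b i : ℝ) : EReal) + P xstar) := h1
      _ = ((b i - a i : ℝ) : EReal) + P xstar := by
          rw [← add_assoc, ← EReal.coe_add]
          ring_nf
  have hPb : P xstar ≠ ⊥ := hNoBot xstar
  have hg : Filter.Tendsto (fun i => ((b i - a i : ℝ) : EReal) + P xstar) Filter.atTop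
      (nhds (P xstar)) := by
    rcases eq_or_ne (P xstar) ⊤ with htop | htop
    · have : (fun i => ((b i - a i : ℝ) : EReal) + P xstar) = fun _ => P xstar := by
        funext i
        rw [htop, EReal.add_top_of_ne_bot (EReal.coe_ne_bot _)]
      rw [this]
      exact tendsto_const_nhds
    · have hrep := EReal.coe_toReal htop hPb
      rw [← hrep]
      have : Filter.Tendsto (fun i => ((b i - a i + (P xstar).toReal : ℝ) : EReal))
          Filter.atTop (nhds (((P xstar).toReal : ℝ) : EReal)) := by
        rw [EReal.tendsto_coe]
        simpa using hc.add (tendsto_const_nhds (x := (P xstar).toReal))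
      simpa [EReal.coe_add] using this
  have hub : Filter.limsup (fun i => P (x (ti i + 1))) Filter.atTop ≤ P xstar := by
    calc Filter.limsup (fun i => P (x (ti i + 1))) Filter.atTop
        ≤ Filter.limsup (fun i => ((b i - a i : ℝ) : EReal) + P xstar) Filter.atTop :=
          Filter.limsup_le_limsup (Filter.Eventually.of_forall key)
      _ = P xstar := hg.limsup_eq
  have hlb : P xstar ≤ Filter.liminf (fun i => P (x (ti i + 1))) Filter.atTop := by
    refine le_of_forall_lt_imp_le_of_dense fun c hc => ?_
    have hev := hz.eventually (hlsc xstar c hc)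
    exact Filter.le_liminf_of_le (by isBoundedDefault) (hev.mono fun i hi => hi.le)
  exact tendsto_of_le_liminf_of_limsup_le hlb hub
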